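/- Let q > 2, Δt > 0, a mesh size h > 0, an integer M_x ≥ 1, nonnegative symmetric summable weights (w_j)_{j≠0}, and suppose C > 0 satisfies the discrete Poincaré–Sobolev inequality for exponent q. Let u⁰ be initial data supported in {|i| ≤ M_x} and not identically zero, let (uⁿ)_{n∈ℕ} be the solution of the fully discrete implicit scheme (FD), and set T*ʰ := ((q−1)/(q−2)) C² ‖u⁰‖_{ℓ^q_h}^{q−2}. Then for every integer n ≥ 1, ‖uⁿ‖_{ℓ^q_h} ≤ ‖u⁰‖_{ℓ^q_h} (T*ʰ/(nΔt))^{n/2} (almost-extinction: faster than geometric decay past the time T*ʰ). -/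

import Mathlib

open scoped BigOperators ENNReal

noncomputable def opow (x r : ℝ) : ℝ := |x| ^ (r - 1) * x

noncomputable def discLap (w u : ℤ → ℝ) (i : ℤ) : ℝ :=
  ∑' j : ℤ, if j = 0 then 0 else w j * (u i - u (i - j))

noncomputable def lqNorm (h q : ℝ) (u : ℤ → ℝ) : ℝ :=
  (∑' i : ℤ, h * |u i| ^ q) ^ (1 / q)

noncomputable def energyNorm (h : ℝ) (w u : ℤ → ℝ) : ℝ :=
  Real.sqrt ((1 / 2) * ∑' i : ℤ, ∑' j : ℤ, if j = 0 then 0 else h * w j * (u i - u (i - j)) ^ 2)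

/-- The fully discrete implicit scheme (FD). -/
def IsFD (q Δt : ℝ) (w : ℤ → ℝ) (Mx : ℤ) (u0 : ℤ → ℝ) (u : ℕ → ℤ → ℝ) : Prop :=
  u 0 = u0 ∧
  (∀ n : ℕ, ∀ i : ℤ, Mx < |i| → u n i = 0) ∧
  (∀ n : ℕ, ∀ i : ℤ, |i| ≤ Mx →
    (opow (u (n + 1) i) (q - 1) - opow (u n i) (q - 1)) / Δt + discLap w (u (n + 1)) i = 0)

/-- A solution of the semi-discrete scheme (SD) with initial data `u0`. -/
def IsSD (q : ℝ) (w : ℤ → ℝ) (Mx : ℤ) (u0 : ℤ → ℝ) (v : ℤ → ℝ → ℝ) : Prop :=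
  (∀ i : ℤ, ContinuousOn (v i) (Set.Ici 0)) ∧
  (∀ i : ℤ, Mx < |i| → ∀ t : ℝ, 0 ≤ t → v i t = 0) ∧
  (∀ i : ℤ, v i 0 = u0 i) ∧
  (∀ i : ℤ, |i| ≤ Mx → ∀ t : ℝ, 0 ≤ t →
    opow (v i t) (q - 1) = opow (u0 i) (q - 1) - ∫ s in (0:ℝ)..t, discLap w (fun k => v k s) i)

/-- `C` satisfies the discrete Poincaré–Sobolev inequality for exponent `q`. -/
def PSConst (h q C : ℝ) (w : ℤ → ℝ) (Mx : ℤ) : Prop :=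
  ∀ f : ℤ → ℝ, (∀ i : ℤ, Mx < |i| → f i = 0) → lqNorm h q f ≤ C * energyNorm h w f

lemma opow_mul_self {q : ℝ} (hq : 2 < q) (x : ℝ) : x * opow x (q - 1) = |x| ^ q := by
  unfold opow
  rcases eq_or_ne x 0 with rfl | hx
  · simp [Real.zero_rpow (by norm_num; linarith : q ≠ 0)]
  · have hax : (0:ℝ) < |x| := abs_pos.2 hx
    have : x * (|x| ^ (q - 1 - 1) * x) = |x| ^ (q - 2) * |x| ^ (2:ℝ) := by
      rw [Real.rpow_two]
      rw [sq_abs]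
      ring_nf
    rw [this, ← Real.rpow_add hax]
    norm_num

lemma abs_opow {q : ℝ} (hq : 2 < q) (x : ℝ) : |opow x (q - 1)| = |x| ^ (q - 1) := by
  unfold opow
  rcases eq_or_ne x 0 with rfl | hx
  · simp [Real.zero_rpow (by norm_num; linarith : q - 1 ≠ 0)]
  · have hax : (0:ℝ) < |x| := abs_pos.2 hx
    rw [abs_mul, abs_of_nonneg (Real.rpow_nonneg (abs_nonneg x) _), ← Real.rpow_add_one (ne_of_gt hax)]
    norm_num

lemma young_opow {q : ℝ} (hq : 2 < q) (x y : ℝ) :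
    x * opow y (q - 1) ≤ |x| ^ q / q + |y| ^ q / (q / (q - 1)) := by
  have hq1 : (1:ℝ) < q := by linarith
  have hcon : Real.HolderConjugate q (q / (q - 1)) := by
    exact (Real.holderConjugate_iff_eq_conjExponent hq1).mpr rfl
  calc x * opow y (q - 1) ≤ |x * opow y (q - 1)| := le_abs_self _
    _ = |x| * |y| ^ (q - 1) := by rw [abs_mul, abs_opow hq]
    _ ≤ |x| ^ q / q + (|y| ^ (q - 1)) ^ (q / (q - 1)) / (q / (q - 1)) :=
        Real.young_inequality_of_nonneg (abs_nonneg x) (Real.rpow_nonneg (abs_nonneg y) _) hcon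
    _ = |x| ^ q / q + |y| ^ q / (q / (q - 1)) := by
        rw [← Real.rpow_mul (abs_nonneg y)]
        congr 2
        have : q - 1 ≠ 0 := by linarith
        field_simp
lemma endgame {q κ : ℝ} (hq : 2 < q) (hκ : 0 < κ) (a : ℕ → ℝ)
    (hnn : ∀ k, 0 ≤ a k) (ha0 : 0 < a 0)
    (key : ∀ k, a (k+1) + κ * a (k+1) ^ ((2:ℝ)/q) ≤ a k) :
    ∀ n : ℕ, 1 ≤ n →
      a n ^ (1/q) ≤ a 0 ^ (1/q) * (a 0 ^ ((q-2)/q) / (((q-2)/q) * κ * n)) ^ ((n:ℝ)/2) := by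
  intro n hn
  have hq0 : (0:ℝ) < q := by linarith
  have hβ1' : (q-2)/q + 2/q = 1 := by field_simp; ring
  set β : ℝ := (q-2)/q with hβ
  have hβpos : 0 < β := div_pos (by linarith) hq0
  have hβlt : β < 1 := by
    rw [hβ, div_lt_one hq0]; linarith
  have hβ1 : β + 2/q = 1 := hβ1'
  have hmono : ∀ k, a (k+1) ≤ a k := by
    intro k
    have h1 := key k
    have h2 : 0 ≤ κ * a (k+1) ^ ((2:ℝ)/q) :=
      mul_nonneg hκ.le (Real.rpow_nonneg (hnn (k+1)) _)
    linarith
  have hanti : ∀ m k : ℕ, m ≤ k → a k ≤ a m := by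
    intro m k hmk
    induction k with
    | zero => simp_all
    | succ k ih =>
      rcases Nat.lt_or_ge m (k+1) with hlt | hge
      · exact le_trans (hmono k) (ih (by omega))
      · have : m = k + 1 := by omega
        simp [this]
  set K : ℝ := β * κ with hK
  have hKpos : 0 < K := mul_pos hβpos hκ
  have hnR : (0:ℝ) < n := by exact_mod_cast hn
  by_cases han : a n = 0
  · rw [han, Real.zero_rpow (by positivity : 1/q ≠ 0)]
    apply mul_nonneg (Real.rpow_nonneg ha0.le _)
    apply Real.rpow_nonneg
    apply div_nonneg (Real.rpow_nonneg ha0.le _)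
    positivity
  · have hapos : ∀ k, k ≤ n → 0 < a k := by
      intro k hk
      exact lt_of_lt_of_le (lt_of_le_of_ne (hnn n) (Ne.symm han)) (hanti k n hk)
    set r : ℕ → ℝ := fun k => a (k+1) ^ ((2:ℝ)/q) / a k ^ ((2:ℝ)/q) with hr
    have hrnn : ∀ k, 0 ≤ r k := fun k =>
      div_nonneg (Real.rpow_nonneg (hnn _) _) (Real.rpow_nonneg (hnn _) _)
    -- step inequality
    have hstep : ∀ k, k + 1 ≤ n → K * r k ≤ a k ^ β - a (k+1) ^ β := by
      intro k hk
      have hx : 0 < a k := hapos k (by omega)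
      have hy : 0 < a (k+1) := hapos (k+1) hk
      set x := a k
      set y := a (k+1)
      have hP : (0:ℝ) < x ^ ((2:ℝ)/q) := Real.rpow_pos_of_pos hx _
      have hxb : x ^ β * x ^ ((2:ℝ)/q) = x := by
        rw [← Real.rpow_add hx, hβ1, Real.rpow_one]
      -- GM ≤ AM
      have hgm := Real.geom_mean_le_arith_mean2_weighted hβpos.le (by linarith : (0:ℝ) ≤ 1 - β)
        (div_nonneg hy.le hx.le) zero_le_one (by ring : β + (1 - β) = 1)
      rw [Real.one_rpow, mul_one, mul_one] at hgm
      -- y^β * x^{2/q} ≤ β y + (1-β) x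
      have hyb : y ^ β * x ^ ((2:ℝ)/q) ≤ β * y + (1 - β) * x := by
        have hdiv : (y / x) ^ β = y ^ β / x ^ β := Real.div_rpow hy.le hx.le β
        rw [hdiv] at hgm
        have hxβ : (0:ℝ) < x ^ β := Real.rpow_pos_of_pos hx _
        have h1 : y ^ β ≤ (β * (y / x) + (1 - β)) * x ^ β := by
          rw [div_le_iff₀ hxβ] at hgm
          linarith
        calc y ^ β * x ^ ((2:ℝ)/q) ≤ ((β * (y / x) + (1 - β)) * x ^ β) * x ^ ((2:ℝ)/q) := by
              apply mul_le_mul_of_nonneg_right h1 hP.le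
          _ = (β * (y / x) + (1 - β)) * x := by rw [mul_assoc, hxb]
          _ = β * y + (1 - β) * x := by field_simp
      have hkey : κ * y ^ ((2:ℝ)/q) ≤ x - y := by have := key k; linarith
      -- multiply target by x^{2/q}
      have hmain : K * y ^ ((2:ℝ)/q) ≤ (x ^ β - y ^ β) * x ^ ((2:ℝ)/q) := by
        have : (x ^ β - y ^ β) * x ^ ((2:ℝ)/q) = x - y ^ β * x ^ ((2:ℝ)/q) := by
          rw [sub_mul, hxb]
        rw [this, hK]
        nlinarith [hβpos, hκ, hkey, hyb]
      rw [hr]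
      show K * (y ^ ((2:ℝ)/q) / x ^ ((2:ℝ)/q)) ≤ x ^ β - y ^ β
      rw [mul_div_assoc'] at *
      exact (div_le_iff₀ hP).mpr hmain
    -- telescoping sum
    have htel : ∑ k ∈ Finset.range n, (a k ^ β - a (k+1) ^ β) = a 0 ^ β - a n ^ β :=
      Finset.sum_range_sub' (fun k => a k ^ β) n
    have hsum : K * ∑ k ∈ Finset.range n, r k ≤ a 0 ^ β := by
      rw [Finset.mul_sum]
      calc ∑ k ∈ Finset.range n, K * r k ≤ ∑ k ∈ Finset.range n, (a k ^ β - a (k+1) ^ β) := by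
            apply Finset.sum_le_sum
            intro k hk
            exact hstep k (Finset.mem_range.mp hk)
        _ = a 0 ^ β - a n ^ β := htel
        _ ≤ a 0 ^ β := by
            have : 0 ≤ a n ^ β := Real.rpow_nonneg (hnn n) _
            linarith
    have hS : ∑ k ∈ Finset.range n, r k ≤ a 0 ^ β / K := (le_div_iff₀' hKpos).mpr hsum
    -- telescoping product
    have hprod : ∏ k ∈ Finset.range n, r k = a n ^ ((2:ℝ)/q) / a 0 ^ ((2:ℝ)/q) := by
      have : ∀ m : ℕ, m ≤ n → ∏ k ∈ Finset.range m, r k = a m ^ ((2:ℝ)/q) / a 0 ^ ((2:ℝ)/q) := by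
        intro m
        induction m with
        | zero => intro _; simp [div_self (ne_of_gt (Real.rpow_pos_of_pos ha0 _))]
        | succ m ih =>
          intro hm
          rw [Finset.prod_range_succ, ih (by omega), hr]
          have h1 : a m ^ ((2:ℝ)/q) ≠ 0 := ne_of_gt (Real.rpow_pos_of_pos (hapos m (by omega)) _)
          have h2 : a 0 ^ ((2:ℝ)/q) ≠ 0 := ne_of_gt (Real.rpow_pos_of_pos ha0 _)
          field_simp
      exact this n le_rfl
    -- AM-GM
    have hw : ∑ _k ∈ Finset.range n, (1/(n:ℝ)) = 1 := by
      rw [Finset.sum_const, Finset.card_range, nsmul_eq_mul]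
      field_simp
    have hgm := Real.geom_mean_le_arith_mean_weighted (Finset.range n) (fun _ => 1/(n:ℝ)) r
      (fun i _ => by positivity) hw (fun i _ => hrnn i)
    rw [Real.finset_prod_rpow (Finset.range n) r (fun i _ => hrnn i) (1/(n:ℝ))] at hgm
    have harith : ∑ i ∈ Finset.range n, (1/(n:ℝ)) * r i ≤ a 0 ^ β / (K * n) := by
      rw [← Finset.mul_sum]
      calc (1/(n:ℝ)) * ∑ i ∈ Finset.range n, r i ≤ (1/(n:ℝ)) * (a 0 ^ β / K) := by
            apply mul_le_mul_of_nonneg_left hS (by positivity)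
        _ = a 0 ^ β / (K * n) := by rw [mul_comm, div_mul_div_comm, mul_one]
    have hmain : (∏ k ∈ Finset.range n, r k) ^ (1/(n:ℝ)) ≤ a 0 ^ β / (K * n) :=
      le_trans hgm harith
    rw [hprod] at hmain
    -- convert product to (a n / a 0) powers
    have hz : a n ^ ((2:ℝ)/q) / a 0 ^ ((2:ℝ)/q) = (a n / a 0) ^ ((2:ℝ)/q) :=
      (Real.div_rpow (hnn n) ha0.le _).symm
    rw [hz] at hmain
    have hznn : (0:ℝ) ≤ a n / a 0 := div_nonneg (hnn n) ha0.le
    rw [← Real.rpow_mul hznn ((2:ℝ)/q) (1/(n:ℝ))] at hmain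
    -- raise to the power n/2
    have hfin := Real.rpow_le_rpow (Real.rpow_nonneg hznn _) hmain
      (by positivity : (0:ℝ) ≤ (n:ℝ)/2)
    rw [← Real.rpow_mul hznn] at hfin
    have hexp : (2:ℝ)/q * (1/(n:ℝ)) * ((n:ℝ)/2) = 1/q := by
      field_simp
    rw [hexp, Real.div_rpow (hnn n) ha0.le] at hfin
    have ha0q : (0:ℝ) < a 0 ^ (1/q) := Real.rpow_pos_of_pos ha0 _
    rw [div_le_iff₀ ha0q] at hfin
    calc a n ^ (1/q) ≤ (a 0 ^ β / (K * ↑n)) ^ ((n:ℝ)/2) * a 0 ^ (1/q) := hfin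
      _ = a 0 ^ (1/q) * (a 0 ^ β / (K * ↑n)) ^ ((n:ℝ)/2) := by ring

set_option maxHeartbeats 2000000 in
lemma energy_sq (h : ℝ) (hh : 0 < h) (w : ℤ → ℝ) (hw0 : ∀ j, 0 ≤ w j)
    (hwsym : ∀ j, w (-j) = w j) (hwsum : Summable w) (v : ℤ → ℝ) (S : Finset ℤ)
    (hv : ∀ i ∉ S, v i = 0) :
    energyNorm h w v ^ 2 = ∑ i ∈ S, h * v i * discLap w v i := by
  -- uniform bound on v
  set M : ℝ := ∑ i ∈ S, |v i| with hM
  have hM0 : 0 ≤ M := Finset.sum_nonneg fun i _ => abs_nonneg _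
  have hMb : ∀ i, |v i| ≤ M := by
    intro i
    by_cases hi : i ∈ S
    · exact Finset.single_le_sum (fun i _ => abs_nonneg (v i)) hi
    · rw [hv i hi, abs_zero]; exact hM0
  have hdiff : ∀ i j : ℤ, |v i - v j| ≤ 2 * M := by
    intro i j
    calc |v i - v j| ≤ |v i| + |v j| := abs_sub _ _
      _ ≤ 2 * M := by have := hMb i; have := hMb j; linarith
  set T : ℤ → ℤ → ℝ := fun i j => if j = 0 then 0 else w j * (v i - v (i - j)) with hT
  have hTb : ∀ i j, ‖T i j‖ ≤ w j * (2 * M) := by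
    intro i j
    by_cases hj : j = 0
    · simp only [hT, hj, if_true, norm_zero]
      exact mul_nonneg (hw0 _) (by linarith)
    · simp only [hT, if_neg hj, Real.norm_eq_abs, abs_mul, abs_of_nonneg (hw0 j)]
      exact mul_le_mul_of_nonneg_left (hdiff _ _) (hw0 j)
  have hTsum : ∀ i, Summable (T i) :=
    fun i => Summable.of_norm_bounded (hwsum.mul_right (2 * M)) (hTb i)
  set P : ℤ × ℤ → ℝ := fun p => (h * v p.1) * T p.1 p.2 with hP
  set Q : ℤ × ℤ → ℝ := fun p => (h * v (p.1 - p.2)) * T p.1 p.2 with hQ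
  -- summability of P
  have hProw : ∀ i, Summable fun j => P (i, j) := by
    intro i
    simp only [hP]
    exact (hTsum i).mul_left _
  have hPsum : Summable P := by
    apply Summable.of_norm
    rw [summable_prod_of_nonneg (fun p => norm_nonneg _)]
    constructor
    · intro i
      simp only [hP, norm_mul]
      exact ((hTsum i).norm.mul_left _)
    · apply summable_of_finite_support
      apply Set.Finite.subset S.finite_toSet
      intro i hi
      by_contra hiS
      refine hi ?_
      have hz : ∀ j, ‖P (i, j)‖ = 0 := fun j => by
        simp [hP, hv i (by simpa using hiS)]
      simp only [hz]
      exact tsum_zero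
  -- the reflection equivalence
  set E : ℤ × ℤ ≃ ℤ × ℤ :=
    ⟨fun p => (p.1 - p.2, -p.2), fun p => (p.1 - p.2, -p.2),
     fun p => by simp [Prod.ext_iff], fun p => by simp [Prod.ext_iff]⟩ with hE
  have hQE : ∀ p, Q (E p) = - P p := by
    rintro ⟨i, j⟩
    simp only [hQ, hP, hE, Equiv.coe_fn_mk, hT]
    have h1 : i - j - -j = i := by omega
    rw [h1]
    by_cases hj : j = 0
    · simp [hj]
    · have hj' : ¬(-j = 0) := by omega
      rw [if_neg hj, if_neg hj', hwsym j]
      ring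
  have hQEfun : (Q ∘ E) = fun p => - P p := funext hQE
  have hQsum : Summable Q := E.summable_iff.mp (by rw [hQEfun]; exact hPsum.neg)
  have htsumQ : ∑' p, Q p = - ∑' p, P p := by
    rw [← E.tsum_eq Q]
    have : ∑' p, Q (E p) = ∑' p, - P p := by
      exact tsum_congr fun p => hQE p
    rw [this, tsum_neg]
  -- F = P - Q
  have hFeq : ∀ i j : ℤ,
      (if j = 0 then (0:ℝ) else h * w j * (v i - v (i - j)) ^ 2) = P (i, j) - Q (i, j) := by
    intro i j
    by_cases hj : j = 0
    · simp [hP, hQ, hT, hj]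
    · simp only [hP, hQ, hT, if_neg hj]
      ring
  have hFsum : Summable (fun p : ℤ × ℤ => P p - Q p) := hPsum.sub hQsum
  have hFrow : ∀ i, Summable fun j => P (i, j) - Q (i, j) := by
    intro i
    apply Summable.sub (hProw i)
    apply Summable.of_norm_bounded (hwsum.mul_right (2 * M * (|h| * M)))
    intro j
    simp only [hQ, norm_mul]
    calc ‖h‖ * ‖v (i - j)‖ * ‖T i j‖ ≤ (|h| * M) * (w j * (2 * M)) := by
          apply mul_le_mul _ (hTb i j) (norm_nonneg _) (by positivity)
          rw [Real.norm_eq_abs, Real.norm_eq_abs]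
          exact mul_le_mul_of_nonneg_left (hMb _) (abs_nonneg h)
      _ = w j * (2 * M * (|h| * M)) := by ring
  -- chain of equalities
  have hnn : 0 ≤ (1/2) * ∑' i : ℤ, ∑' j : ℤ,
      (if j = 0 then (0:ℝ) else h * w j * (v i - v (i - j)) ^ 2) := by
    apply mul_nonneg (by norm_num)
    apply tsum_nonneg
    intro i
    apply tsum_nonneg
    intro j
    by_cases hj : j = 0
    · simp [hj]
    · rw [if_neg hj]
      exact mul_nonneg (mul_nonneg hh.le (hw0 j)) (sq_nonneg _)
  rw [energyNorm, Real.sq_sqrt hnn]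
  have e1 : ∑' i : ℤ, ∑' j : ℤ, (if j = 0 then (0:ℝ) else h * w j * (v i - v (i - j)) ^ 2)
      = ∑' p : ℤ × ℤ, (P p - Q p) := by
    rw [hFsum.tsum_prod' hFrow]
    exact tsum_congr fun i => tsum_congr fun j => hFeq i j
  rw [e1, hPsum.tsum_sub hQsum, htsumQ]
  have e2 : ∑' p : ℤ × ℤ, P p = ∑ i ∈ S, h * v i * discLap w v i := by
    rw [hPsum.tsum_prod' hProw]
    have e3 : ∀ i : ℤ, ∑' j, P (i, j) = h * v i * discLap w v i := by
      intro i
      simp only [hP]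
      rw [tsum_mul_left]
      rfl
    rw [tsum_congr e3]
    apply tsum_eq_sum
    intro i hiS
    simp [hv i hiS]
  rw [e2]
  ring

set_option maxHeartbeats 2000000 in
theorem stmt12 (q Δt h C : ℝ) (hq : 2 < q) (hΔt : 0 < Δt) (hh : 0 < h)
    (Mx : ℤ) (hMx : 1 ≤ Mx)
    (w : ℤ → ℝ) (hw0 : ∀ j : ℤ, 0 ≤ w j) (hwsym : ∀ j : ℤ, w (-j) = w j) (hwsum : Summable w)
    (hC : 0 < C) (hPS : PSConst h q C w Mx)
    (u0 : ℤ → ℝ) (hu0 : ∀ i : ℤ, Mx < |i| → u0 i = 0) (hu0ne : ∃ i : ℤ, u0 i ≠ 0)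
    (u : ℕ → ℤ → ℝ) (hu : IsFD q Δt w Mx u0 u) :
    ∀ n : ℕ, 1 ≤ n →
      lqNorm h q (u n) ≤
        lqNorm h q u0 *
          ((((q - 1) / (q - 2)) * C ^ 2 * lqNorm h q u0 ^ (q - 2)) / ((n : ℝ) * Δt))
            ^ ((n : ℝ) / 2) := by
  obtain ⟨hu0eq, hsupp, hscheme⟩ := hu
  have hq0 : (0:ℝ) < q := by linarith
  have hq1 : (0:ℝ) < q - 1 := by linarith
  have hq2 : (0:ℝ) < q - 2 := by linarith
  set S : Finset ℤ := Finset.Icc (-Mx) Mx with hS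
  have hmem : ∀ i : ℤ, i ∈ S ↔ |i| ≤ Mx := by
    intro i
    rw [hS, Finset.mem_Icc, abs_le]
  set A : ℕ → ℝ := fun k => ∑ i ∈ S, h * |u k i| ^ q with hA
  have hAnn : ∀ k, 0 ≤ A k := by
    intro k
    apply Finset.sum_nonneg
    intro i _
    exact mul_nonneg hh.le (Real.rpow_nonneg (abs_nonneg _) _)
  have hlq : ∀ k, lqNorm h q (u k) = A k ^ (1/q) := by
    intro k
    rw [lqNorm, hA]
    congr 1
    apply tsum_eq_sum
    intro i hiS
    have : Mx < |i| := by
      by_contra hcon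
      exact hiS ((hmem i).mpr (by linarith))
    rw [hsupp k i this]
    simp [Real.zero_rpow (ne_of_gt hq0)]
  have hlq0 : lqNorm h q u0 = A 0 ^ (1/q) := by rw [← hu0eq, hlq]
  -- positivity of A 0
  have hA0pos : 0 < A 0 := by
    obtain ⟨i0, hi0⟩ := hu0ne
    have hi0S : i0 ∈ S := by
      rw [hmem]
      by_contra hcon
      exact hi0 (hu0 i0 (by linarith [not_le.mp hcon]))
    have hterm : 0 < h * |u 0 i0| ^ q := by
      apply mul_pos hh
      apply Real.rpow_pos_of_pos
      rw [hu0eq]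
      exact abs_pos.2 hi0
    calc (0:ℝ) < h * |u 0 i0| ^ q := hterm
      _ ≤ A 0 := Finset.single_le_sum
          (fun i _ => mul_nonneg hh.le (Real.rpow_nonneg (abs_nonneg _) _)) hi0S
  set κ : ℝ := q * Δt / ((q - 1) * C^2) with hκdef
  have hκ : 0 < κ := div_pos (mul_pos hq0 hΔt) (mul_pos hq1 (pow_pos hC 2))
  -- the key one-step inequality
  have KEY : ∀ k : ℕ, A (k+1) + κ * A (k+1) ^ ((2:ℝ)/q) ≤ A k := by
    intro k
    set v : ℤ → ℝ := u (k+1) with hv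
    set p : ℤ → ℝ := u k with hp
    have hvsupp : ∀ i ∉ S, v i = 0 := by
      intro i hiS
      apply hsupp
      by_contra hcon
      exact hiS ((hmem i).mpr (by linarith [not_lt.mp hcon]))
    have hE2 : energyNorm h w v ^ 2 = ∑ i ∈ S, h * v i * discLap w v i :=
      energy_sq h hh w hw0 hwsym hwsum v S hvsupp
    have hPS' : lqNorm h q v ≤ C * energyNorm h w v := by
      apply hPS
      intro i hi
      apply hsupp
      exact hi
    -- Poincaré in terms of A
    have hPoin : A (k+1) ^ ((2:ℝ)/q) ≤ C^2 * ∑ i ∈ S, h * v i * discLap w v i := by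
      have hsq : (lqNorm h q v)^2 ≤ (C * energyNorm h w v)^2 :=
        pow_le_pow_left₀ (by rw [hlq]; exact Real.rpow_nonneg (hAnn _) _) hPS' 2
      rw [mul_pow, hE2] at hsq
      rw [hlq] at hsq
      have : (A (k+1) ^ ((1:ℝ)/q))^(2:ℕ) = A (k+1) ^ ((2:ℝ)/q) := by
        rw [← Real.rpow_natCast (A (k+1) ^ ((1:ℝ)/q)) 2, ← Real.rpow_mul (hAnn _)]
        congr 1
        push_cast
        ring
      rwa [this] at hsq
    -- scheme identity summed
    have hd : ∀ i ∈ S, discLap w v i = -((opow (v i) (q-1) - opow (p i) (q-1))/Δt) := by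
      intro i hi
      have := hscheme k i ((hmem i).mp hi)
      linarith
    have hsum_eq : ∑ i ∈ S, h * v i * discLap w v i
        = -(1/Δt) * ((∑ i ∈ S, h * (v i * opow (v i) (q-1)))
            - ∑ i ∈ S, h * (v i * opow (p i) (q-1))) := by
      rw [← Finset.sum_sub_distrib, Finset.mul_sum]
      apply Finset.sum_congr rfl
      intro i hi
      rw [hd i hi]
      field_simp
    have hB1 : ∑ i ∈ S, h * (v i * opow (v i) (q-1)) = A (k+1) := by
      apply Finset.sum_congr rfl
      intro i _
      rw [opow_mul_self hq]
    have hB2 : ∑ i ∈ S, h * (v i * opow (p i) (q-1))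
        ≤ A (k+1) / q + A k / (q / (q-1)) := by
      calc ∑ i ∈ S, h * (v i * opow (p i) (q-1))
          ≤ ∑ i ∈ S, (h * |v i| ^ q / q + h * |p i| ^ q / (q / (q-1))) := by
            apply Finset.sum_le_sum
            intro i _
            have := young_opow hq (v i) (p i)
            have h2 := mul_le_mul_of_nonneg_left this hh.le
            calc h * (v i * opow (p i) (q-1))
                ≤ h * (|v i| ^ q / q + |p i| ^ q / (q / (q-1))) := h2
              _ = h * |v i| ^ q / q + h * |p i| ^ q / (q / (q-1)) := by ring
        _ = A (k+1) / q + A k / (q / (q-1)) := by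
            rw [Finset.sum_add_distrib, ← Finset.sum_div, ← Finset.sum_div]
    -- assemble
    have hfin : A (k+1) ^ ((2:ℝ)/q)
        ≤ (C^2/Δt) * (A (k+1) / q + A k / (q / (q-1)) - A (k+1)) := by
      calc A (k+1) ^ ((2:ℝ)/q) ≤ C^2 * ∑ i ∈ S, h * v i * discLap w v i := hPoin
        _ = (C^2/Δt) * ((∑ i ∈ S, h * (v i * opow (p i) (q-1))) - A (k+1)) := by
            rw [hsum_eq, hB1]
            field_simp
            ring
        _ ≤ (C^2/Δt) * (A (k+1) / q + A k / (q / (q-1)) - A (k+1)) := by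
            apply mul_le_mul_of_nonneg_left _ (by positivity)
            linarith [hB2]
    -- multiply by q/(q-1) * Δt/C^2
    have hmul := mul_le_mul_of_nonneg_left hfin
      (by positivity : (0:ℝ) ≤ (q/(q-1)) * (Δt/C^2))
    have e1 : (q/(q-1)) * (Δt/C^2) * (A (k+1) ^ ((2:ℝ)/q)) = κ * A (k+1) ^ ((2:ℝ)/q) := by
      rw [hκdef]
      have hC2 : (C:ℝ)^2 ≠ 0 := ne_of_gt (pow_pos hC 2)
      field_simp
    have e2 : (q/(q-1)) * (Δt/C^2) * ((C^2/Δt) * (A (k+1) / q + A k / (q / (q-1)) - A (k+1)))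
        = A k - A (k+1) := by
      have hC2 : (C:ℝ)^2 ≠ 0 := ne_of_gt (pow_pos hC 2)
      field_simp
      ring
    rw [e1, e2] at hmul
    linarith
  -- apply the endgame lemma
  intro n hn
  have hend := endgame hq hκ A hAnn hA0pos KEY n hn
  rw [hlq n]
  -- identify the rate constants
  have hbase : ((q - 1) / (q - 2)) * C ^ 2 * lqNorm h q u0 ^ (q - 2) / ((n : ℝ) * Δt)
      = A 0 ^ ((q-2)/q) / (((q-2)/q) * κ * n) := by
    rw [hlq0, ← Real.rpow_mul (hAnn 0)]
    have : (1:ℝ)/q * (q - 2) = (q-2)/q := by ring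
    rw [this, hκdef]
    have hC2 : (C:ℝ)^2 ≠ 0 := ne_of_gt (pow_pos hC 2)
    rcases eq_or_ne (n:ℝ) 0 with hn0 | hn0
    · rw [hn0]; simp
    · field_simp
  rw [hbase, hlq0]
  exact hend
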